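/- Primal–dual gap lemma (equations (2.21)–(2.22)): Let x̄ ∈ X and ḡ ∈ ℝⁿ with J_f(ḡ) < +∞ be given, set ḡ* = ∇f(x̄), and let x* be an optimal solution of min_{x∈X} Ψ(x) with g* = ∇f(x*). Then (i) Ψ(x̄) − Ψ(x*) = Q_f((x̄, g*), (x*, ḡ*)); (ii) Ψ(x̄) − Ψ(x*) ≤ gap*((x̄, ḡ)) := sup_{g : J_f(g)<+∞} Q_f((x̄, ḡ), (x*, g)); and (iii) if X is bounded, gap*((x̄, ḡ)) ≤ gap((x̄, ḡ)) := sup_{x ∈ X, g : J_f(g)<+∞} Q_f((x̄, ḡ), (x, g)). -/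

import Mathlib

open scoped RealInnerProductSpace

section Aux

variable {n : ℕ}

/-- Gradient inequality for a convex differentiable function. -/
lemma grad_ineq_aux (f : EuclideanSpace ℝ (Fin n) → ℝ)
    (hfconv : ConvexOn ℝ Set.univ f)
    (x u g : EuclideanSpace ℝ (Fin n)) (hg : HasGradientAt f g x) :
    f x + ⟪g, u - x⟫ ≤ f u := by
  -- line map t ↦ x + t • (u - x)
  set c : ℝ → EuclideanSpace ℝ (Fin n) := fun t => t • (u - x) + x with hc
  have hcaff : ConvexOn ℝ Set.univ (f ∘ c) := by
    have := hfconv.comp_affineMap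
      ((LinearMap.toSpanSingleton ℝ _ (u - x)).toAffineMap + AffineMap.const ℝ ℝ x)
    simpa [Set.preimage_univ, hc, Function.comp, Pi.add_def, LinearMap.toSpanSingleton_apply] using this
  have hcder : HasDerivAt c (u - x) 0 := by
    have h1 : HasDerivAt (fun t : ℝ => t • (u - x)) ((1 : ℝ) • (u - x)) 0 :=
      (hasDerivAt_id 0).smul_const (u - x)
    simpa [hc] using h1.add_const x
  have hfd : HasFDerivAt f (InnerProductSpace.toDual ℝ _ g) x :=
    (hasGradientAt_iff_hasFDerivAt).mp hg
  have hfd' : HasFDerivAt f (InnerProductSpace.toDual ℝ _ g) (c 0) := by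
    simpa [hc] using hfd
  have hcomp : HasDerivAt (f ∘ c) ⟪g, u - x⟫ 0 := by
    have := hfd'.comp_hasDerivAt 0 hcder
    simpa [hc, InnerProductSpace.toDual_apply_apply] using this
  rcases eq_or_ne u x with rfl | hne
  · simp
  have hslope : ⟪g, u - x⟫ ≤ slope (f ∘ c) 0 1 :=
    hcaff.le_slope_of_hasDerivAt (Set.mem_univ 0) (Set.mem_univ 1) one_pos hcomp
  have : slope (f ∘ c) 0 1 = f u - f x := by
    simp [slope_def_field, hc, Function.comp]
  linarith [hslope, this ▸ hslope]

/-- Fenchel equality at gradient points; boundedness of the sup. -/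
lemma conj_bdd_aux (f : EuclideanSpace ℝ (Fin n) → ℝ)
    (hfconv : ConvexOn ℝ Set.univ f)
    (x g : EuclideanSpace ℝ (Fin n)) (hg : HasGradientAt f g x) :
    BddAbove (Set.range fun u => ⟪u, g⟫ - f u) := by
  refine ⟨⟪x, g⟫ - f x, ?_⟩
  rintro _ ⟨u, rfl⟩
  have h1 := grad_ineq_aux f hfconv x u g hg
  have hinner : ⟪g, u - x⟫ = ⟪u, g⟫ - ⟪x, g⟫ := by
    rw [inner_sub_right, real_inner_comm g u, real_inner_comm g x]
  rw [hinner] at h1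
  show ⟪u, g⟫ - f u ≤ ⟪x, g⟫ - f x
  linarith

lemma conj_eq_aux (f : EuclideanSpace ℝ (Fin n) → ℝ)
    (hfconv : ConvexOn ℝ Set.univ f)
    (x g : EuclideanSpace ℝ (Fin n)) (hg : HasGradientAt f g x) :
    (⨆ u, (⟪u, g⟫ - f u)) = ⟪x, g⟫ - f x := by
  apply le_antisymm
  · apply ciSup_le
    intro u
    have h1 := grad_ineq_aux f hfconv x u g hg
    have hinner : ⟪g, u - x⟫ = ⟪u, g⟫ - ⟪x, g⟫ := by
      rw [inner_sub_right, real_inner_comm g u, real_inner_comm g x]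
    rw [hinner] at h1
    linarith
  · exact le_ciSup (conj_bdd_aux f hfconv x g hg) x

end Aux

/-- Primal–dual gap lemma (equations (2.21)–(2.22)): with `ḡ* = ∇f(x̄)`,
`g* = ∇f(x*)`, (i) `Ψ(x̄) - Ψ(x*) = Q_f((x̄, g*), (x*, ḡ*))`;
(ii) `Ψ(x̄) - Ψ(x*) ≤ gap*((x̄, ḡ)) = sup_{g ∈ dom J_f} Q_f((x̄, ḡ), (x*, g))`;
(iii) if `X` is bounded then `gap*((x̄, ḡ)) ≤ gap((x̄, ḡ))`.
The suprema are taken in `EReal` over the domain of the conjugate `J_f`. -/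
theorem primal_dual_gap_lemma
    {n : ℕ} (X : Set (EuclideanSpace ℝ (Fin n)))
    (hXne : X.Nonempty) (hXclosed : IsClosed X) (hXconvex : Convex ℝ X)
    (f h w : EuclideanSpace ℝ (Fin n) → ℝ)
    (f' : EuclideanSpace ℝ (Fin n) → EuclideanSpace ℝ (Fin n))
    (μ Lf : ℝ) (hμ : 0 ≤ μ) (hLf : 0 ≤ Lf)
    (hfconv : ConvexOn ℝ Set.univ f)
    (hfdiff : ∀ u, HasGradientAt f (f' u) u)
    (hfLip : ∀ u v, ‖f' u - f' v‖ ≤ Lf * ‖u - v‖)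
    (hhconv : ConvexOn ℝ X h) (hwconv : ConvexOn ℝ X w)
    (J : EuclideanSpace ℝ (Fin n) → ℝ)
    (hJ : ∀ g, J g = ⨆ u, (⟪u, g⟫ - f u))
    (Q : (EuclideanSpace ℝ (Fin n) × EuclideanSpace ℝ (Fin n)) →
         (EuclideanSpace ℝ (Fin n) × EuclideanSpace ℝ (Fin n)) → ℝ)
    (hQ : ∀ zb z, Q zb z =
      (h zb.1 + μ * w zb.1 + ⟪zb.1, z.2⟫ - J z.2)
      - (h z.1 + μ * w z.1 + ⟪z.1, zb.2⟫ - J zb.2))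
    (xb : EuclideanSpace ℝ (Fin n)) (hxb : xb ∈ X)
    (gb : EuclideanSpace ℝ (Fin n))
    (hgb : BddAbove (Set.range fun u => ⟪u, gb⟫ - f u))
    (xstar : EuclideanSpace ℝ (Fin n)) (hxstarX : xstar ∈ X)
    (hopt : ∀ u ∈ X, f xstar + h xstar + μ * w xstar ≤ f u + h u + μ * w u) :
    ((f xb + h xb + μ * w xb) - (f xstar + h xstar + μ * w xstar)
        = Q (xb, f' xstar) (xstar, f' xb))
    ∧ (((f xb + h xb + μ * w xb) - (f xstar + h xstar + μ * w xstar) : ℝ) : EReal)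
        ≤ ⨆ g : {g : EuclideanSpace ℝ (Fin n) //
              BddAbove (Set.range fun u => ⟪u, g⟫ - f u)},
            (Q (xb, gb) (xstar, g.1) : EReal)
    ∧ (Bornology.IsBounded X →
        (⨆ g : {g : EuclideanSpace ℝ (Fin n) //
              BddAbove (Set.range fun u => ⟪u, g⟫ - f u)},
            (Q (xb, gb) (xstar, g.1) : EReal))
        ≤ ⨆ xx : X, ⨆ g : {g : EuclideanSpace ℝ (Fin n) //
              BddAbove (Set.range fun u => ⟪u, g⟫ - f u)},
            (Q (xb, gb) (xx.1, g.1) : EReal)) := by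
  have hJb : J (f' xb) = ⟪xb, f' xb⟫ - f xb := by
    rw [hJ]; exact conj_eq_aux f hfconv xb (f' xb) (hfdiff xb)
  have hJs : J (f' xstar) = ⟪xstar, f' xstar⟫ - f xstar := by
    rw [hJ]; exact conj_eq_aux f hfconv xstar (f' xstar) (hfdiff xstar)
  refine ⟨?_, ?_, ?_⟩
  · rw [hQ]; simp only []; rw [hJb, hJs]; ring
  · -- part (ii)
    have hbddb : BddAbove (Set.range fun u => ⟪u, f' xb⟫ - f u) :=
      conj_bdd_aux f hfconv xb (f' xb) (hfdiff xb)
    have hJgb : ⟪xstar, gb⟫ - f xstar ≤ J gb := by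
      rw [hJ]; exact le_ciSup hgb xstar
    have hreal : (f xb + h xb + μ * w xb) - (f xstar + h xstar + μ * w xstar)
        ≤ Q (xb, gb) (xstar, f' xb) := by
      rw [hQ]; simp only []; rw [hJb]; linarith
    calc (((f xb + h xb + μ * w xb) - (f xstar + h xstar + μ * w xstar) : ℝ) : EReal)
        ≤ ((Q (xb, gb) (xstar, f' xb) : ℝ) : EReal) := EReal.coe_le_coe_iff.mpr hreal
      _ ≤ _ := le_iSup (fun g : {g : EuclideanSpace ℝ (Fin n) //
              BddAbove (Set.range fun u => ⟪u, g⟫ - f u)} =>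
              ((Q (xb, gb) (xstar, g.1) : ℝ) : EReal)) ⟨f' xb, hbddb⟩
  · intro _
    exact le_iSup_of_le (⟨xstar, hxstarX⟩ : X) le_rfl
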